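/- Let F be an infinite field, let A be an associative unital F-algebra, and let L_1, …, L_n be Lie ideals of A. Then for every noncommutative polynomial f = f(X_1, …, X_n) in the free algebra F⟨X_1, …, X_n⟩, the F-linear span of the set of values f(L_1, …, L_n) = {f(a_1, …, a_n) : a_i ∈ L_i} is again a Lie ideal of A. -/

import Mathlib

open Polynomial

/-- Vandermonde inversion: if all "polynomial values" `∑ t^k • v k` lie in a submodule,
then so does each coefficient `v k`, provided the evaluation points are distinct. -/
lemma vand_aux {F : Type*} [Field F] {M : Type*} [AddCommGroup M] [Module F M]
    (W : Submodule F M) (d : ℕ) (t : Fin d → F) (ht : Function.Injective t)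
    (v : Fin d → M) (h : ∀ j, (∑ k : Fin d, t j ^ (k : ℕ) • v k) ∈ W) : ∀ k, v k ∈ W := by
  intro k
  set Mv := Matrix.vandermonde t with hMv
  have hdet : IsUnit Mv.det :=
    (Matrix.det_vandermonde_ne_zero_iff.mpr ht).isUnit
  have hinv : Mv⁻¹ * Mv = 1 := Matrix.nonsing_inv_mul _ hdet
  have key : v k = ∑ j, Mv⁻¹ k j • (∑ k' : Fin d, t j ^ (k' : ℕ) • v k') := by
    have : ∀ j (k' : Fin d), t j ^ (k' : ℕ) = Mv j k' := fun j k' => rfl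
    calc v k = ∑ k', (1 : Matrix (Fin d) (Fin d) F) k k' • v k' := by
          simp [Matrix.one_apply, Finset.sum_ite_eq]
      _ = ∑ k', ((Mv⁻¹ * Mv) k k') • v k' := by rw [hinv]
      _ = ∑ k', (∑ j, Mv⁻¹ k j * Mv j k') • v k' := by
          simp [Matrix.mul_apply]
      _ = ∑ k', ∑ j, (Mv⁻¹ k j * Mv j k') • v k' := by
          simp [Finset.sum_smul]
      _ = ∑ j, ∑ k', (Mv⁻¹ k j * Mv j k') • v k' := Finset.sum_comm
      _ = ∑ j, Mv⁻¹ k j • (∑ k' : Fin d, t j ^ (k' : ℕ) • v k') := by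
          simp [Finset.smul_sum, mul_smul, this]
  rw [key]
  exact Submodule.sum_smul_mem W _ (fun j _ => h j)

theorem stmt_0 (F : Type*) [Field F] [Infinite F]
    (A : Type*) [Ring A] [Algebra F A]
    (n : ℕ) (L : Fin n → Submodule F A)
    (hL : ∀ i, ∀ l ∈ L i, ∀ a : A, l * a - a * l ∈ L i)
    (f : FreeAlgebra F (Fin n)) :
    ∀ x ∈ Submodule.span F
        {y : A | ∃ a : Fin n → A, (∀ i, a i ∈ L i) ∧ FreeAlgebra.lift F a f = y},
      ∀ b : A, x * b - b * x ∈ Submodule.span F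
        {y : A | ∃ a : Fin n → A, (∀ i, a i ∈ L i) ∧ FreeAlgebra.lift F a f = y} := by
  set S := {y : A | ∃ a : Fin n → A, (∀ i, a i ∈ L i) ∧ FreeAlgebra.lift F a f = y} with hS
  set W := Submodule.span F S with hW
  intro x hx b
  -- linear map x ↦ [x, b]
  set φ : A →ₗ[F] A := LinearMap.mulRight F b - LinearMap.mulLeft F b with hφ
  have hφapp : ∀ x : A, φ x = x * b - b * x := fun x => rfl
  suffices hmain : W ≤ Submodule.comap φ W by
    exact hmain hx
  rw [hW]
  apply Submodule.span_le.mpr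
  rintro y ⟨a, ha, rfl⟩
  simp only [SetLike.mem_coe, Submodule.mem_comap, hφapp]
  -- generator case
  set c : Fin n → A := fun i => a i * b - b * a i with hc
  have hcL : ∀ i, c i ∈ L i := fun i => hL i (a i) (ha i) b
  -- the polynomial P
  set ahat : Fin n → Polynomial A := fun i => Polynomial.C (a i) + Polynomial.X * Polynomial.C (c i) with hahat
  set P : Polynomial A := FreeAlgebra.lift F ahat f with hP
  -- evaluation alg hom at t
  have hcomm : ∀ t : F, ∀ x : A, Commute ((AlgHom.id F A) x) (algebraMap F A t) :=
    fun t x => (Algebra.commutes t x).symm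
  set ev : F → (Polynomial A →ₐ[F] A) :=
    fun t => Polynomial.eval₂AlgHom (AlgHom.id F A) (algebraMap F A t) (hcomm t) with hev
  -- evaluation of P at t equals f on shifted arguments
  have heval : ∀ t : F, (ev t) P = FreeAlgebra.lift F (fun i => a i + t • c i) f := by
    intro t
    have : (ev t).comp (FreeAlgebra.lift F ahat) = FreeAlgebra.lift F (fun i => a i + t • c i) := by
      apply FreeAlgebra.hom_ext
      funext i
      simp [hev, hahat, Algebra.smul_def, Algebra.commutes]
    calc (ev t) P = ((ev t).comp (FreeAlgebra.lift F ahat)) f := rfl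
      _ = FreeAlgebra.lift F (fun i => a i + t • c i) f := by rw [this]
  -- each evaluation lies in W
  have hevmem : ∀ t : F, (ev t) P ∈ W := by
    intro t
    rw [heval t]
    apply Submodule.subset_span
    exact ⟨fun i => a i + t • c i, fun i => (L i).add_mem (ha i) ((L i).smul_mem t (hcL i)), rfl⟩
  -- rewrite the evaluation as a power sum
  set d : ℕ := P.natDegree + 2 with hd
  have hsum : ∀ t : F, (∑ k : Fin d, t ^ (k : ℕ) • P.coeff k) ∈ W := by
    intro t
    have h1 : (ev t) P = ∑ k ∈ Finset.range d, P.coeff k * (algebraMap F A t) ^ k := by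
      simpa [hev] using Polynomial.eval₂_eq_sum_range' (R := A) (S := A)
        (RingHom.id A) (p := P) (n := d) (by omega) (algebraMap F A t)
    have h2 : ∀ k : ℕ, P.coeff k * (algebraMap F A t) ^ k = t ^ k • P.coeff k := by
      intro k
      rw [← map_pow, ← Algebra.commutes, ← Algebra.smul_def]
    rw [Fin.sum_univ_eq_sum_range (fun k => t ^ k • P.coeff k) d]
    have := hevmem t
    rw [h1] at this
    simpa [h2] using this
  -- injective points
  obtain tpts : Fin d ↪ F := (Fin.valEmbedding).trans (Infinite.natEmbedding F)
  have hcoeff : ∀ k : Fin d, P.coeff k ∈ W := by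
    apply vand_aux W d tpts tpts.injective (fun k => P.coeff k)
    intro j
    -- need the sum with points tpts j; hsum gives it for every t
    exact hsum (tpts j)
  -- identify coeff 1 with the commutator, by induction on f
  have hkey : ∀ g : FreeAlgebra F (Fin n),
      (FreeAlgebra.lift F ahat g).coeff 0 = FreeAlgebra.lift F a g ∧
      (FreeAlgebra.lift F ahat g).coeff 1 =
        (FreeAlgebra.lift F a g) * b - b * (FreeAlgebra.lift F a g) := by
    intro g
    induction g using FreeAlgebra.induction with
    | grade0 r =>
        constructor
        · simp [Polynomial.algebraMap_apply]
        · simp [Polynomial.algebraMap_apply, Algebra.commutes]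
    | grade1 i =>
        constructor
        · simp [hahat, Polynomial.coeff_X_mul]
        · simp [hahat, hc]
    | mul p q hp hq =>
        obtain ⟨hp0, hp1⟩ := hp
        obtain ⟨hq0, hq1⟩ := hq
        constructor
        · simp [map_mul, Polynomial.mul_coeff_zero, hp0, hq0]
        · rw [map_mul, map_mul, Polynomial.coeff_mul]
          rw [show (Finset.HasAntidiagonal.antidiagonal 1 : Finset (ℕ × ℕ)) = {(0,1),(1,0)} by decide]
          rw [Finset.sum_pair (by decide)]
          dsimp only
          rw [hp0, hp1, hq0, hq1]
          noncomm_ring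
    | add p q hp hq =>
        obtain ⟨hp0, hp1⟩ := hp
        obtain ⟨hq0, hq1⟩ := hq
        constructor
        · simp [map_add, hp0, hq0]
        · simp only [map_add, Polynomial.coeff_add, hp1, hq1]
          noncomm_ring
  have h1 := (hkey f).2
  have : P.coeff 1 ∈ W := by
    have : ((1 : Fin d) : ℕ) = 1 := by simp [hd]
    have h' := hcoeff (1 : Fin d)
    rw [this] at h'
    exact h'
  rw [← h1]
  exact this
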